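/- Let A be a commutative k-algebra which is an integral domain, of finite type over k, and formally smooth over k. Let I be an ideal of A which is stable under all derivations, i.e. δ(I) ⊆ I for every δ ∈ Der_k(A). Then I = 0 or I = A. (Equivalently, A is a simple module over the ring of operators generated by multiplications and derivations.) -/

import Mathlib

universe u


section Aux

variable {k : Type u} [Field k] {A : Type u} [CommRing A] [Algebra k A]
variable (m : Ideal A) (e : (A ⧸ m) ≃ₐ[k] k)

/-- The "constant coefficient" of `a : A` at the maximal ideal `m` with residue field `k`. -/
noncomputable def resCoeff : A →ₐ[k] k := e.toAlgHom.comp (Ideal.Quotient.mkₐ k m)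

lemma mk_algebraMap' (x : k) :
    Ideal.Quotient.mk m (algebraMap k A x) = algebraMap k (A ⧸ m) x := by
  rw [IsScalarTower.algebraMap_apply k A (A ⧸ m), Ideal.Quotient.algebraMap_eq]

lemma algebraMap_resCoeff (x : A ⧸ m) : algebraMap k (A ⧸ m) (e x) = x := by
  have h := e.symm.commutes (e x)
  simp only [Algebra.algebraMap_self, RingHom.id_apply] at h
  rw [← h, e.symm_apply_apply]

lemma mk_eq_resCoeff (a : A) :
    Ideal.Quotient.mk m a = algebraMap k (A ⧸ m) (resCoeff m e a) := by
  have h : resCoeff m e a = e (Ideal.Quotient.mk m a) := rfl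
  rw [h, algebraMap_resCoeff]

lemma sub_resCoeff_mem (a : A) : a - algebraMap k A (resCoeff m e a) ∈ m := by
  rw [← Ideal.Quotient.eq_zero_iff_mem, map_sub, mk_algebraMap', ← mk_eq_resCoeff m e, sub_self]

end Aux

section Aux2

variable {k : Type u} [Field k] {A : Type u} [CommRing A] [Algebra k A]
variable (m : Ideal A) (e : (A ⧸ m) ≃ₐ[k] k)

/-- `m / m²` as a `k`-vector space, realized inside `A ⧸ m²`. -/
noncomputable abbrev cotang (k : Type u) [Field k] {A : Type u} [CommRing A] [Algebra k A]
    (m : Ideal A) : Submodule k (A ⧸ m ^ 2) :=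
  (m.map (Ideal.Quotient.mk (m ^ 2))).restrictScalars k

/-- The `k`-linear map `A → m/m²`, `a ↦ a - c(a) mod m²`. -/
noncomputable def vmAux : A →ₗ[k] cotang k m :=
  LinearMap.codRestrict (cotang k m)
    ((Ideal.Quotient.mkₐ k (m ^ 2)).toLinearMap.comp
      (LinearMap.id - (Algebra.linearMap k A).comp (resCoeff m e).toLinearMap))
    (fun a => by
      simp only [LinearMap.comp_apply, LinearMap.sub_apply, LinearMap.id_apply,
        AlgHom.toLinearMap_apply, Algebra.linearMap_apply, Ideal.Quotient.mkₐ_eq_mk,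
        Submodule.restrictScalars_mem]
      exact Ideal.mem_map_of_mem _ (sub_resCoeff_mem m e a))

lemma vmAux_apply (a : A) :
    (vmAux m e a : A ⧸ m ^ 2) =
      Ideal.Quotient.mk (m ^ 2) (a - algebraMap k A (resCoeff m e a)) := rfl

lemma vmAux_mul (a b : A) :
    vmAux m e (a * b) = resCoeff m e a • vmAux m e b + resCoeff m e b • vmAux m e a := by
  apply Subtype.ext
  push_cast [vmAux_apply]
  rw [Algebra.smul_def, Algebra.smul_def, ← mk_algebraMap' (m ^ 2), ← mk_algebraMap' (m ^ 2),
    ← map_mul, ← map_mul, ← map_add, Ideal.Quotient.mk_eq_mk_iff_sub_mem]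
  have : a * b - algebraMap k A ((resCoeff m e) (a * b)) -
      (algebraMap k A ((resCoeff m e) a) * (b - algebraMap k A ((resCoeff m e) b)) +
        algebraMap k A ((resCoeff m e) b) * (a - algebraMap k A ((resCoeff m e) a))) =
      (a - algebraMap k A (resCoeff m e a)) * (b - algebraMap k A (resCoeff m e b)) := by
    rw [map_mul, map_mul]; ring
  rw [this, pow_two]
  exact Ideal.mul_mem_mul (sub_resCoeff_mem m e a) (sub_resCoeff_mem m e b)

end Aux2

section Aux3

variable {k : Type u} [Field k] {A : Type u} [CommRing A] [Algebra k A]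

/-- Over a formally smooth algebra, derivations into a quotient lift to derivations
into the ring itself, since the module of Kähler differentials is projective. -/
lemma exists_derivation_lift [Algebra.FormallySmooth k A] (m : Ideal A)
    (δ₀ : Derivation k A (A ⧸ m)) :
    ∃ δ : Derivation k A A, ∀ a, Ideal.Quotient.mk m (δ a) = δ₀ a := by
  haveI : Module.Projective A (Ω[A⁄k]) :=
    Algebra.FormallySmooth.projective_kaehlerDifferential
  obtain ⟨h, hh⟩ := Module.projective_lifting_property m.mkQ δ₀.liftKaehlerDifferential
      (Submodule.mkQ_surjective m)
  refine ⟨h.compDer (KaehlerDifferential.D k A), fun a => ?_⟩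
  have h2 := LinearMap.congr_fun hh (KaehlerDifferential.D k A a)
  simpa [Derivation.liftKaehlerDifferential_comp_D] using h2

variable (m : Ideal A) (e : (A ⧸ m) ≃ₐ[k] k)

/-- Key consequence of formal smoothness: every `k`-linear functional on `m/m²` is realized
by a global derivation of `A`. -/
lemma exists_good_derivation [Algebra.FormallySmooth k A] (φ : cotang k m →ₗ[k] k) :
    ∃ δ : Derivation k A A, ∀ a : A,
      Ideal.Quotient.mk m (δ a) = algebraMap k (A ⧸ m) (φ (vmAux m e a)) := by
  have leib : ∀ a b : A,
      (Algebra.linearMap k (A ⧸ m)).comp (φ.comp (vmAux m e)) (a * b) =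
        a • (Algebra.linearMap k (A ⧸ m)).comp (φ.comp (vmAux m e)) b +
          b • (Algebra.linearMap k (A ⧸ m)).comp (φ.comp (vmAux m e)) a := by
    intro a b
    simp only [LinearMap.comp_apply, Algebra.linearMap_apply]
    rw [vmAux_mul m e a b, map_add, map_smul, map_smul, map_add, smul_eq_mul, smul_eq_mul,
      map_mul, map_mul]
    rw [Algebra.smul_def, Algebra.smul_def, Ideal.Quotient.algebraMap_eq,
      mk_eq_resCoeff m e a, mk_eq_resCoeff m e b]
  have h1 : vmAux m e 1 = 0 := by
    apply Subtype.ext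
    rw [vmAux_apply]
    simp [map_one (resCoeff m e)]
  let δ₀ : Derivation k A (A ⧸ m) :=
    { toLinearMap := (Algebra.linearMap k (A ⧸ m)).comp (φ.comp (vmAux m e))
      map_one_eq_zero' := by
        simp only [LinearMap.comp_apply, h1, map_zero, Algebra.linearMap_apply]
      leibniz' := leib }
  obtain ⟨δ, hδ⟩ := exists_derivation_lift m δ₀
  exact ⟨δ, fun a => hδ a⟩

end Aux3

/-- The residue field of a maximal ideal in a finite type algebra over an algebraically
closed field is the base field. -/
lemma exists_residue_equiv {k : Type u} [Field k] [IsAlgClosed k] {A : Type u} [CommRing A]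
    [Algebra k A] [Algebra.FiniteType k A] (m : Ideal A) [m.IsMaximal] :
    Nonempty ((A ⧸ m) ≃ₐ[k] k) := by
  haveI : Algebra.FiniteType k (A ⧸ m) :=
    Algebra.FiniteType.of_surjective (Ideal.Quotient.mkₐ k m)
      (Ideal.Quotient.mkₐ_surjective k m)
  letI : Field (A ⧸ m) := Ideal.Quotient.field m
  haveI : Module.Finite k (A ⧸ m) := finite_of_finite_type_of_isJacobsonRing k (A ⧸ m)
  have hsurj : Function.Surjective (algebraMap k (A ⧸ m)) :=
    IsAlgClosed.algebraMap_bijective_of_isIntegral.2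
  exact ⟨(AlgEquiv.ofBijective (Algebra.ofId k (A ⧸ m))
    ⟨(algebraMap k (A ⧸ m)).injective, hsurj⟩).symm⟩

/-- Let `A` be a commutative `k`-algebra which is an integral domain, of
finite type over `k` and formally smooth over `k` (the coordinate ring of an irreducible
smooth affine variety).  If an ideal `I` of `A` is stable under all `k`-linear derivations
of `A`, then `I = 0` or `I = A`. -/
theorem derivation_stable_ideal_eq_bot_or_top
    (k : Type u) [Field k] [IsAlgClosed k] [CharZero k]
    (A : Type u) [CommRing A] [IsDomain A] [Algebra k A]
    [Algebra.FiniteType k A] [Algebra.FormallySmooth k A]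
    (I : Ideal A)
    (hI : ∀ (δ : Derivation k A A), ∀ a ∈ I, δ a ∈ I) :
    I = ⊥ ∨ I = ⊤ := by
  by_contra hcon
  push_neg at hcon
  obtain ⟨hbot, htop⟩ := hcon
  haveI : IsNoetherianRing A := Algebra.FiniteType.isNoetherianRing k A
  -- choose a maximal ideal containing I
  obtain ⟨m, hm, hIm⟩ := Ideal.exists_le_maximal I htop
  haveI : m.IsMaximal := hm
  -- the residue field is k
  obtain ⟨e⟩ := exists_residue_equiv (k := k) m
  -- m/m² is finite dimensional over k
  obtain ⟨s, hs⟩ := IsNoetherian.noetherian m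
  have hV : cotang k m =
      Submodule.span k (⇑(Ideal.Quotient.mk (m ^ 2)) '' ↑s) := by
    apply le_antisymm
    · intro v hv
      rw [Submodule.restrictScalars_mem] at hv
      obtain ⟨x, hxm, rfl⟩ :=
        (Ideal.mem_map_iff_of_surjective _ Ideal.Quotient.mk_surjective).mp hv
      rw [← hs] at hxm
      clear hv
      induction hxm using Submodule.span_induction with
      | mem y hy => exact Submodule.subset_span ⟨y, hy, rfl⟩
      | zero => simp
      | add y z _ _ hy hz => rw [map_add]; exact Submodule.add_mem _ hy hz
      | smul a y hy hpy =>
        have hym : y ∈ m := hs ▸ hy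
        have hdec : a • y = (a - algebraMap k A (resCoeff m e a)) * y +
            algebraMap k A (resCoeff m e a) * y := by rw [smul_eq_mul]; ring
        rw [hdec, map_add]
        have h1 : Ideal.Quotient.mk (m ^ 2)
            ((a - algebraMap k A (resCoeff m e a)) * y) = 0 := by
          rw [Ideal.Quotient.eq_zero_iff_mem, pow_two]
          exact Ideal.mul_mem_mul (sub_resCoeff_mem m e a) hym
        rw [h1, zero_add, map_mul, mk_algebraMap', ← Algebra.smul_def]
        exact Submodule.smul_mem _ _ hpy
    · rw [Submodule.span_le]
      rintro v ⟨y, hy, rfl⟩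
      rw [SetLike.mem_coe, Submodule.restrictScalars_mem]
      exact Ideal.mem_map_of_mem _ (hs ▸ Submodule.subset_span hy)
  haveI : FiniteDimensional k (cotang k m) := by
    rw [hV]
    exact FiniteDimensional.span_of_finite k (s.finite_toSet.image _)
  -- a basis of m/m², lifted to elements of m, together with dual derivations
  let b := Module.finBasis k (cotang k m)
  have hbex : ∀ i, ∃ z, z ∈ m ∧ Ideal.Quotient.mk (m ^ 2) z = (b i : A ⧸ m ^ 2) := fun i =>
    (Ideal.mem_map_iff_of_surjective _ Ideal.Quotient.mk_surjective).mp
      (Submodule.restrictScalars_mem k _ _ |>.mp (b i).2)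
  choose x hxm hxeq using hbex
  have hδex : ∀ i, ∃ δ : Derivation k A A, ∀ a : A,
      Ideal.Quotient.mk m (δ a) = algebraMap k (A ⧸ m) ((b.coord i) (vmAux m e a)) := fun i =>
    exists_good_derivation m e (b.coord i)
  choose δ hδ using hδex
  have hδm : ∀ i (a : A), δ i a - algebraMap k A (b.coord i (vmAux m e a)) ∈ m := by
    intro i a
    rw [← Ideal.Quotient.eq_zero_iff_mem, map_sub, hδ, mk_algebraMap', sub_self]
  -- Step 1: the "Euler vector field" D = ∑ xᵢ δᵢ is congruent to the identity on m/m²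
  have L1 : ∀ y ∈ m, (∑ i, x i * δ i y) - y ∈ m ^ 2 := by
    intro y hy
    have hcy : resCoeff m e y = 0 := by
      have h0 : Ideal.Quotient.mk m y = 0 := Ideal.Quotient.eq_zero_iff_mem.mpr hy
      show e (Ideal.Quotient.mk m y) = 0
      rw [h0, map_zero]
    have hyv : (vmAux m e y : A ⧸ m ^ 2) = Ideal.Quotient.mk (m ^ 2) y := by
      rw [vmAux_apply, hcy, map_zero, sub_zero]
    have step1 : (∑ i, x i * δ i y) -
        (∑ i, algebraMap k A (b.coord i (vmAux m e y)) * x i) ∈ m ^ 2 := by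
      rw [← Finset.sum_sub_distrib]
      refine Submodule.sum_mem _ fun i _ => ?_
      have hq : x i * δ i y - algebraMap k A (b.coord i (vmAux m e y)) * x i
          = x i * (δ i y - algebraMap k A (b.coord i (vmAux m e y))) := by ring
      rw [hq]
      have hmm := Ideal.mul_mem_mul (hxm i) (hδm i y)
      rwa [← pow_two] at hmm
    have step2 : (∑ i, algebraMap k A (b.coord i (vmAux m e y)) * x i) - y ∈ m ^ 2 := by
      rw [← Ideal.Quotient.eq_zero_iff_mem, map_sub, map_sum]
      have h0 := congrArg (Subtype.val) (b.sum_repr (vmAux m e y))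
      rw [Submodule.coe_sum] at h0
      have hterm : ∀ i, ((b.repr (vmAux m e y) i • b i : cotang k m) : A ⧸ m ^ 2)
          = Ideal.Quotient.mk (m ^ 2) (algebraMap k A (b.coord i (vmAux m e y)) * x i) := by
        intro i
        rw [Submodule.coe_smul, map_mul, mk_algebraMap', hxeq i, Algebra.smul_def,
          Module.Basis.coord_apply]
      simp only [hterm] at h0
      rw [h0, hyv, sub_self]
    have := Submodule.add_mem _ step1 step2
    simpa [sub_add_sub_cancel] using this
  -- Step 2 (Euler's identity): for `a ∈ m^N`, `D a ≡ N • a  mod m^(N+1)`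
  have L2 : ∀ (N : ℕ) (a : A), a ∈ m ^ N → (∑ i, x i * δ i a) - N • a ∈ m ^ (N + 1) := by
    intro N
    induction N with
    | zero =>
      intro a _
      rw [zero_smul, sub_zero, pow_one]
      exact Submodule.sum_mem _ fun i _ => Ideal.mul_mem_right _ _ (hxm i)
    | succ N ih =>
      intro a ha
      rw [pow_succ] at ha
      refine Submodule.mul_induction_on ha (fun u hu v hv => ?_) (fun r t hr ht => ?_)
      · have key : ∑ i, x i * δ i (u * v)
            = u * (∑ i, x i * δ i v) + v * (∑ i, x i * δ i u) := by
          rw [Finset.mul_sum, Finset.mul_sum, ← Finset.sum_add_distrib]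
          refine Finset.sum_congr rfl fun i _ => ?_
          rw [Derivation.leibniz, smul_eq_mul, smul_eq_mul]
          ring
        have hid : (∑ i, x i * δ i (u * v)) - (N + 1 : ℕ) • (u * v)
            = v * ((∑ i, x i * δ i u) - N • u) + u * ((∑ i, x i * δ i v) - v) := by
          rw [key, nsmul_eq_mul, nsmul_eq_mul]
          push_cast
          ring
        rw [hid]
        refine Submodule.add_mem _ ?_ ?_
        · exact (pow_succ' m (N + 1)) ▸ Ideal.mul_mem_mul hv (ih u hu)
        · exact (pow_add m N 2) ▸ Ideal.mul_mem_mul hu (L1 v hv)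
      · have hadd : ∑ i, x i * δ i (r + t)
            = (∑ i, x i * δ i r) + (∑ i, x i * δ i t) := by
          rw [← Finset.sum_add_distrib]
          refine Finset.sum_congr rfl fun i _ => ?_
          rw [map_add, mul_add]
        have hid : (∑ i, x i * δ i (r + t)) - (N + 1 : ℕ) • (r + t)
            = ((∑ i, x i * δ i r) - (N + 1 : ℕ) • r)
              + ((∑ i, x i * δ i t) - (N + 1 : ℕ) • t) := by
          rw [hadd, nsmul_eq_mul, nsmul_eq_mul, nsmul_eq_mul]
          ring
        rw [hid]
        exact Submodule.add_mem _ hr ht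
  -- Step 3: if `a ∈ m^N` with `N ≥ 1` and all `δᵢ a ∈ m^N`, then `a ∈ m^(N+1)`
  have star : ∀ N : ℕ, 1 ≤ N → ∀ a ∈ m ^ N, (∀ i, δ i a ∈ m ^ N) → a ∈ m ^ (N + 1) := by
    intro N hN a ha hda
    have hD : (∑ i, x i * δ i a) ∈ m ^ (N + 1) := by
      rw [pow_succ']
      exact Submodule.sum_mem _ fun i _ => Ideal.mul_mem_mul (hxm i) (hda i)
    have hNa : (N : k) • a ∈ m ^ (N + 1) := by
      rw [Nat.cast_smul_eq_nsmul]
      have h4 : (N : ℕ) • a = (∑ i, x i * δ i a) - ((∑ i, x i * δ i a) - N • a) :=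
        (sub_sub_cancel _ _).symm
      rw [h4]
      exact Submodule.sub_mem _ hD (L2 N a ha)
    have hNk : (N : k) ≠ 0 := Nat.cast_ne_zero.mpr (by omega)
    have ha' : a = (N : k)⁻¹ • ((N : k) • a) := by
      rw [smul_smul, inv_mul_cancel₀ hNk, one_smul]
    rw [ha']
    exact Submodule.smul_of_tower_mem _ _ hNa
  -- Final argument: take a nonzero element of I of minimal m-adic order
  obtain ⟨a₀, ha₀I, ha₀⟩ := Submodule.ne_bot_iff I |>.mp hbot
  have hKrull : ⨅ n : ℕ, m ^ n = ⊥ := Ideal.iInf_pow_eq_bot_of_isDomain m hm.ne_top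
  have hex : ∃ N, a₀ ∉ m ^ N := by
    by_contra h
    push_neg at h
    exact ha₀ (by simpa [hKrull] using (Submodule.mem_iInf fun n : ℕ => m ^ n).mpr h)
  classical
  have hPex : ∃ N, ∃ a ∈ I, a ∉ m ^ N := by
    obtain ⟨N1, hN1⟩ := hex
    exact ⟨N1, a₀, ha₀I, hN1⟩
  obtain ⟨a, haI, haN⟩ := Nat.find_spec hPex
  have hmin : ∀ M < Nat.find hPex, ∀ c ∈ I, c ∈ m ^ M := by
    intro M hM c hc
    by_contra hcc
    exact Nat.find_min hPex hM ⟨c, hc, hcc⟩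
  have h2le : 2 ≤ Nat.find hPex := by
    by_contra hlt
    push_neg at hlt
    interval_cases h : Nat.find hPex
    · exact haN (by simp)
    · exact haN (by simpa using hIm haI)
  have heq : Nat.find hPex = (Nat.find hPex - 1) + 1 := by omega
  set N := Nat.find hPex - 1 with hNdef
  rw [heq] at haN
  have haN' : a ∈ m ^ N := hmin N (by omega) a haI
  have hda : ∃ i, δ i a ∉ m ^ N := by
    by_contra h
    push_neg at h
    exact haN (star N (by omega) a haN' h)
  obtain ⟨i, hi⟩ := hda
  exact hi (hmin N (by omega) (δ i a) (hI (δ i) a haI))
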